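/- Let A be a real symmetric positive definite n × n matrix whose quadratic form is given, in an orthonormal basis (v_1, …, v_n) of ℝⁿ, by ⟨Ax, x⟩ = Σᵢ wᵢ² ⟨x, vᵢ⟩² with wᵢ > 0 (so {wᵢ²} are the eigenvalues of A). Given nonnegative integers n_1, …, n_n, define f : ℝⁿ → ℝ by f(x) = Πᵢ Ψ_{nᵢ}(√wᵢ · ⟨x, vᵢ⟩), where Ψ_p are the Hermite functions. Then f satisfies -Δf(x) + ⟨Ax, x⟩ f(x) = (Σᵢ (2nᵢ + 1) wᵢ) f(x) for all x ∈ ℝⁿ; that is, Σᵢ (2nᵢ + 1) wᵢ is an eigenvalue of the harmonic oscillator K = -Δ + ⟨Ax, x⟩ with eigenfunction f. -/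

import Mathlib

open scoped RealInnerProductSpace

/-- Second directional derivative of `u` in the direction `v` at the point `z`. -/
noncomputable def dirDeriv2 {E : Type*} [NormedAddCommGroup E] [NormedSpace ℝ E]
    (u : E → ℝ) (v : E) (z : E) : ℝ :=
  fderiv ℝ (fun w => fderiv ℝ u w v) z v

/-- The Laplacian `Δu(x) = Σᵢ ∂²u/∂xᵢ²(x)` on `ℝⁿ`. -/
noncomputable def lap {n : ℕ} (u : EuclideanSpace ℝ (Fin n) → ℝ)
    (x : EuclideanSpace ℝ (Fin n)) : ℝ :=
  ∑ i : Fin n, dirDeriv2 u (EuclideanSpace.single i 1) x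

/-- The quadratic form `⟨Ax, x⟩ = Σ_{i,j} a_{ij} xᵢ xⱼ` of a matrix `A`. -/
def quadForm {n : ℕ} (A : Matrix (Fin n) (Fin n) ℝ) (x : EuclideanSpace ℝ (Fin n)) : ℝ :=
  ∑ i : Fin n, ∑ j : Fin n, A i j * x i * x j

/-- The physicists' Hermite polynomials: `H_0 = 1`, `H_{p+1}(x) = 2x H_p(x) - H_p'(x)`. -/
noncomputable def physHermite : ℕ → Polynomial ℝ
  | 0 => 1
  | p + 1 => 2 * Polynomial.X * physHermite p - Polynomial.derivative (physHermite p)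

/-- The Hermite functions `Ψ_p(x) = (√π 2^p p!)^{-1/2} H_p(x) e^{-x²/2}`. -/
noncomputable def hermiteFun (p : ℕ) (x : ℝ) : ℝ :=
  (Real.sqrt Real.pi * 2 ^ p * Nat.factorial p : ℝ) ^ (-(1 : ℝ) / 2) *
    (physHermite p).eval x * Real.exp (-x ^ 2 / 2)

/-! ### Auxiliary lemmas -/

namespace HOaux

open Polynomial

lemma physHermite_succ (p : ℕ) : physHermite (p+1)
    = 2 * Polynomial.X * physHermite p - Polynomial.derivative (physHermite p) := rfl

lemma physHermite_zero : physHermite 0 = 1 := rfl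

lemma physHermite_deriv_succ (p : ℕ) :
    derivative (physHermite (p+1)) = C (2*((p:ℝ)+1)) * physHermite p := by
  induction p with
  | zero =>
    rw [physHermite_succ, physHermite_zero]
    simp
    rw [show ((2:ℝ[X])) = C 2 from (map_ofNat C 2).symm]
  | succ p ih =>
    have hD : derivative (physHermite p) = 2 * Polynomial.X * physHermite p - physHermite (p+1) := by
      rw [physHermite_succ p]; ring
    rw [physHermite_succ (p+1), derivative_sub]
    simp only [derivative_mul, derivative_C, derivative_X, derivative_ofNat, zero_mul,
      zero_add, mul_one]
    rw [ih]
    simp only [derivative_mul, derivative_C, zero_mul, zero_add]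
    rw [hD]
    have h3 : (C (2*((p:ℝ)+1+1)) : ℝ[X]) = C (2*((p:ℝ)+1)) + 2 := by
      rw [show (2*((p:ℝ)+1+1)) = 2*((p:ℝ)+1) + 2 by ring, map_add, map_ofNat]
    push_cast
    rw [h3]
    ring

lemma physHermite_ode (p : ℕ) (x : ℝ) :
    (derivative (derivative (physHermite p))).eval x
      = 2*x*(derivative (physHermite p)).eval x - 2*p*(physHermite p).eval x := by
  cases p with
  | zero => simp [physHermite]
  | succ p =>
    rw [physHermite_deriv_succ]
    have hD : derivative (physHermite p) = 2 * Polynomial.X * physHermite p - physHermite (p+1) := by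
      rw [physHermite_succ p]; ring
    rw [derivative_mul, derivative_C, hD]
    simp
    ring

/-- First derivative of the Hermite function. -/
noncomputable def hFunD (p : ℕ) (x : ℝ) : ℝ :=
  (Real.sqrt Real.pi * 2 ^ p * Nat.factorial p : ℝ) ^ (-(1 : ℝ) / 2) *
    ((derivative (physHermite p)).eval x - x * (physHermite p).eval x) * Real.exp (-x ^ 2 / 2)

lemma hasDerivAt_exp_gauss (x : ℝ) :
    HasDerivAt (fun x : ℝ => Real.exp (-x ^ 2 / 2)) (Real.exp (-x ^ 2 / 2) * (-x)) x := by
  have h1 : HasDerivAt (fun x : ℝ => -x ^ 2 / 2) (-x) x := by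
    have := ((hasDerivAt_pow 2 x).neg.div_const 2)
    refine this.congr_deriv ?_
    simp
    ring
  exact h1.exp

lemma hasDerivAt_hermiteFun (p : ℕ) (x : ℝ) :
    HasDerivAt (hermiteFun p) (hFunD p x) x := by
  set c : ℝ := (Real.sqrt Real.pi * 2 ^ p * Nat.factorial p : ℝ) ^ (-(1 : ℝ) / 2) with hc
  have heq : hermiteFun p = fun x => c * ((physHermite p).eval x * Real.exp (-x ^ 2 / 2)) := by
    funext y; simp [hermiteFun, mul_assoc, hc]
  have hp : HasDerivAt (fun x => (physHermite p).eval x)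
      ((derivative (physHermite p)).eval x) x := (physHermite p).hasDerivAt x
  have h := (hp.mul (hasDerivAt_exp_gauss x)).const_mul c
  rw [heq]
  refine h.congr_deriv ?_
  simp only [hFunD, ← hc]
  ring

lemma hasDerivAt_hFunD (p : ℕ) (x : ℝ) :
    HasDerivAt (hFunD p) ((x ^ 2 - (2 * p + 1)) * hermiteFun p x) x := by
  set c : ℝ := (Real.sqrt Real.pi * 2 ^ p * Nat.factorial p : ℝ) ^ (-(1 : ℝ) / 2) with hc
  have heq : hFunD p = fun x => c *
      (((derivative (physHermite p)).eval x - x * (physHermite p).eval x)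
        * Real.exp (-x ^ 2 / 2)) := by
    funext y; simp [hFunD, mul_assoc, hc]
  have hin : HasDerivAt
      (fun x => (derivative (physHermite p)).eval x - x * (physHermite p).eval x)
      ((derivative (derivative (physHermite p))).eval x
        - (1 * (physHermite p).eval x + x * (derivative (physHermite p)).eval x)) x :=
    ((derivative (physHermite p)).hasDerivAt x).sub
      ((hasDerivAt_id x).mul ((physHermite p).hasDerivAt x))
  have h := (hin.mul (hasDerivAt_exp_gauss x)).const_mul c
  rw [heq]
  refine h.congr_deriv ?_
  rw [physHermite_ode]
  simp only [hermiteFun, ← hc]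
  ring

lemma hasDerivAt_hermiteFun_scaled (p : ℕ) (a x : ℝ) :
    HasDerivAt (fun t => hermiteFun p (a * t)) (a * hFunD p (a * x)) x := by
  have h := (hasDerivAt_hermiteFun p (a * x)).comp x ((hasDerivAt_id x).const_mul a)
  rw [show a * hFunD p (a * x) = hFunD p (a * x) * (a * 1) by ring]
  exact h

lemma hasDerivAt_hFunD_scaled (p : ℕ) (a x : ℝ) :
    HasDerivAt (fun t => a * hFunD p (a * t))
      (a ^ 2 * (((a * x) ^ 2 - (2 * p + 1)) * hermiteFun p (a * x))) x := by
  have h := ((hasDerivAt_hFunD p (a * x)).comp x ((hasDerivAt_id x).const_mul a)).const_mul a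
  refine h.congr_deriv ?_
  ring

/-! ### The Laplacian of a product of functions of orthonormal coordinates -/

variable {n : ℕ}

lemma prod_update_eq (φ : Fin n → ℝ → ℝ) (g : ℝ → ℝ) (i : Fin n) (t : Fin n → ℝ) :
    ∏ k, Function.update φ i g k (t k) = g (t i) * ∏ k ∈ Finset.univ.erase i, φ k (t k) := by
  rw [← Finset.mul_prod_erase Finset.univ (fun k => Function.update φ i g k (t k))
    (Finset.mem_univ i)]
  rw [Function.update_self]
  congr 1
  exact Finset.prod_congr rfl fun k hk => by
    rw [Function.update_of_ne (Finset.ne_of_mem_erase hk)]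

lemma hasFDerivAt_prod_inner (v : Fin n → EuclideanSpace ℝ (Fin n))
    (ψ ψ' : Fin n → ℝ → ℝ) (hd : ∀ i t, HasDerivAt (ψ i) (ψ' i t) t)
    (x : EuclideanSpace ℝ (Fin n)) :
    HasFDerivAt (fun y => ∏ i, ψ i ⟪y, v i⟫)
      (∑ i, ((∏ k ∈ Finset.univ.erase i, ψ k ⟪x, v k⟫) * ψ' i ⟪x, v i⟫) •
        (innerSL ℝ (v i))) x := by
  have hterm : ∀ i, HasFDerivAt (fun y : EuclideanSpace ℝ (Fin n) => ψ i ⟪y, v i⟫)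
      (ψ' i ⟪x, v i⟫ • innerSL ℝ (v i)) x := by
    intro i
    have hfun : (fun y : EuclideanSpace ℝ (Fin n) => (⟪y, v i⟫ : ℝ)) = ⇑(innerSL ℝ (v i)) := by
      funext y
      rw [innerSL_apply_apply, real_inner_comm]
    have hlin : HasFDerivAt (fun y : EuclideanSpace ℝ (Fin n) => (⟪y, v i⟫ : ℝ))
        (innerSL ℝ (v i)) x := by
      rw [hfun]; exact (innerSL ℝ (v i)).hasFDerivAt
    exact (hd i ⟪x, v i⟫).comp_hasFDerivAt x hlin
  have h2 := HasFDerivAt.finset_prod (u := Finset.univ)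
    (g := fun i (y : EuclideanSpace ℝ (Fin n)) => ψ i ⟪y, v i⟫)
    (g' := fun i => ψ' i ⟪x, v i⟫ • innerSL ℝ (v i)) (fun i _ => hterm i)
  simpa [smul_smul] using h2

lemma fderiv_prod_inner_apply (v : Fin n → EuclideanSpace ℝ (Fin n))
    (ψ ψ' : Fin n → ℝ → ℝ) (hd : ∀ i t, HasDerivAt (ψ i) (ψ' i t) t)
    (w : EuclideanSpace ℝ (Fin n)) (e : EuclideanSpace ℝ (Fin n)) :
    fderiv ℝ (fun y => ∏ i, ψ i ⟪y, v i⟫) w e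
      = ∑ i, ⟪v i, e⟫ * ∏ k, Function.update ψ i (ψ' i) k ⟪w, v k⟫ := by
  rw [(hasFDerivAt_prod_inner v ψ ψ' hd w).fderiv]
  simp only [ContinuousLinearMap.coe_sum', Finset.sum_apply,
    ContinuousLinearMap.coe_smul', Pi.smul_apply, innerSL_apply_apply, smul_eq_mul]
  refine Finset.sum_congr rfl fun i _ => ?_
  rw [prod_update_eq]
  ring

lemma lap_prod (v : Fin n → EuclideanSpace ℝ (Fin n)) (hv : Orthonormal ℝ v)
    (ψ ψ' ψ'' : Fin n → ℝ → ℝ)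
    (hd1 : ∀ i t, HasDerivAt (ψ i) (ψ' i t) t)
    (hd2 : ∀ i t, HasDerivAt (ψ' i) (ψ'' i t) t)
    (z : EuclideanSpace ℝ (Fin n)) :
    lap (fun y => ∏ i, ψ i ⟪y, v i⟫) z
      = ∑ i, ψ'' i ⟪z, v i⟫ * ∏ k ∈ Finset.univ.erase i, ψ k ⟪z, v k⟫ := by
  have hχ : ∀ i k t, HasDerivAt (Function.update ψ i (ψ' i) k)
      (Function.update ψ' i (ψ'' i) k t) t := by
    intro i k t
    by_cases h : k = i
    · subst h
      rw [Function.update_self, Function.update_self]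
      exact hd2 k t
    · rw [Function.update_of_ne h, Function.update_of_ne h]
      exact hd1 k t
  have hstep : ∀ e : EuclideanSpace ℝ (Fin n),
      dirDeriv2 (fun y => ∏ i, ψ i ⟪y, v i⟫) e z
        = ∑ i, ⟪v i, e⟫ * ∑ j, ((∏ k ∈ Finset.univ.erase j,
            Function.update ψ i (ψ' i) k ⟪z, v k⟫) *
            Function.update ψ' i (ψ'' i) j ⟪z, v j⟫) * ⟪v j, e⟫ := by
    intro e
    have hfun : (fun w => fderiv ℝ (fun y => ∏ i, ψ i ⟪y, v i⟫) w e)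
        = fun w => ∑ i, ⟪v i, e⟫ * ∏ k, Function.update ψ i (ψ' i) k ⟪w, v k⟫ :=
      funext fun w => fderiv_prod_inner_apply v ψ ψ' hd1 w e
    have hsum : HasFDerivAt
        (fun w : EuclideanSpace ℝ (Fin n) =>
          ∑ i, ⟪v i, e⟫ * ∏ k, Function.update ψ i (ψ' i) k ⟪w, v k⟫)
        (∑ i, ⟪v i, e⟫ • (∑ j, ((∏ k ∈ Finset.univ.erase j,
            Function.update ψ i (ψ' i) k ⟪z, v k⟫) *
            Function.update ψ' i (ψ'' i) j ⟪z, v j⟫) • innerSL ℝ (v j))) z :=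
      HasFDerivAt.fun_sum fun i _ =>
        (hasFDerivAt_prod_inner v (Function.update ψ i (ψ' i))
          (Function.update ψ' i (ψ'' i)) (hχ i) z).const_mul _
    rw [dirDeriv2, hfun, hsum.fderiv]
    simp only [ContinuousLinearMap.coe_sum', Finset.sum_apply,
      ContinuousLinearMap.coe_smul', Pi.smul_apply, innerSL_apply_apply, smul_eq_mul,
      Finset.mul_sum]
  have hinner : ∀ i j : Fin n, ∑ l, (v i) l * (v j) l = if i = j then (1:ℝ) else 0 := by
    intro i j
    rw [← orthonormal_iff_ite.mp hv i j]
    simp [PiLp.inner_apply, mul_comm]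
  simp only [lap]
  rw [Finset.sum_congr rfl fun l _ => hstep (EuclideanSpace.single l 1)]
  simp only [EuclideanSpace.inner_single_right, map_one, one_mul, mul_one, starRingEnd_apply,
    star_trivial]
  rw [Finset.sum_comm]
  refine Finset.sum_congr rfl fun i _ => ?_
  have key : ∑ l, (v i) l * ∑ j, ((∏ k ∈ Finset.univ.erase j,
        Function.update ψ i (ψ' i) k ⟪z, v k⟫) *
        Function.update ψ' i (ψ'' i) j ⟪z, v j⟫) * (v j) l
      = ∑ j, ((∏ k ∈ Finset.univ.erase j,
        Function.update ψ i (ψ' i) k ⟪z, v k⟫) *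
        Function.update ψ' i (ψ'' i) j ⟪z, v j⟫) * ∑ l, (v i) l * (v j) l := by
    simp_rw [Finset.mul_sum]
    rw [Finset.sum_comm]
    exact Finset.sum_congr rfl fun j _ => Finset.sum_congr rfl fun l _ => by ring
  rw [key]
  simp only [hinner, mul_ite, mul_one, mul_zero]
  rw [Finset.sum_ite_eq]
  simp only [Finset.mem_univ, if_true]
  rw [Function.update_self, mul_comm]
  congr 1
  exact Finset.prod_congr rfl fun k hk => by
    rw [Function.update_of_ne (Finset.ne_of_mem_erase hk)]

end HOaux

open HOaux in
/-- if `A` is symmetric positive definite with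
`⟨Ax, x⟩ = Σᵢ wᵢ² ⟨x, vᵢ⟩²` for an orthonormal basis `(vᵢ)` and `wᵢ > 0`, then for
nonnegative integers `nᵢ` the function `f(x) = Πᵢ Ψ_{nᵢ}(√wᵢ ⟨x, vᵢ⟩)` satisfies
`-Δf + ⟨Ax, x⟩ f = (Σᵢ (2nᵢ + 1) wᵢ) f`, i.e. `Σᵢ (2nᵢ+1) wᵢ` is an eigenvalue of
the harmonic oscillator `K = -Δ + ⟨Ax, x⟩` with eigenfunction `f`. -/
theorem harmonic_oscillator_eigenfunction (n : ℕ) (A : Matrix (Fin n) (Fin n) ℝ)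
    (hA : A.IsSymm) (hApos : A.PosDef)
    (v : Fin n → EuclideanSpace ℝ (Fin n)) (hv : Orthonormal ℝ v)
    (w : Fin n → ℝ) (hw : ∀ i, 0 < w i)
    (hQ : ∀ x, quadForm A x = ∑ i : Fin n, (w i) ^ 2 * ⟪x, v i⟫ ^ 2)
    (m : Fin n → ℕ) :
    ∀ x, -lap (fun y => ∏ i : Fin n, hermiteFun (m i) (Real.sqrt (w i) * ⟪y, v i⟫)) x
        + quadForm A x * ∏ i : Fin n, hermiteFun (m i) (Real.sqrt (w i) * ⟪x, v i⟫)
      = (∑ i : Fin n, (2 * m i + 1) * w i) *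
          ∏ i : Fin n, hermiteFun (m i) (Real.sqrt (w i) * ⟪x, v i⟫) := by
  intro x
  have hd1 : ∀ (i : Fin n) (t : ℝ),
      HasDerivAt (fun t => hermiteFun (m i) (Real.sqrt (w i) * t))
        (Real.sqrt (w i) * hFunD (m i) (Real.sqrt (w i) * t)) t :=
    fun i t => hasDerivAt_hermiteFun_scaled (m i) (Real.sqrt (w i)) t
  have hd2 : ∀ (i : Fin n) (t : ℝ),
      HasDerivAt (fun t => Real.sqrt (w i) * hFunD (m i) (Real.sqrt (w i) * t))
        ((w i ^ 2 * t ^ 2 - (2 * (m i : ℝ) + 1) * w i) *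
          hermiteFun (m i) (Real.sqrt (w i) * t)) t := by
    intro i t
    have h := hasDerivAt_hFunD_scaled (m i) (Real.sqrt (w i)) t
    convert h using 1
    rw [mul_pow, Real.sq_sqrt (hw i).le]
    ring
  have hl : lap (fun y => ∏ i, hermiteFun (m i) (Real.sqrt (w i) * ⟪y, v i⟫)) x
      = ∑ i, (w i ^ 2 * ⟪x, v i⟫ ^ 2 - (2 * (m i : ℝ) + 1) * w i) *
          hermiteFun (m i) (Real.sqrt (w i) * ⟪x, v i⟫) *
          ∏ k ∈ Finset.univ.erase i, hermiteFun (m k) (Real.sqrt (w k) * ⟪x, v k⟫) :=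
    lap_prod v hv
      (fun i t => hermiteFun (m i) (Real.sqrt (w i) * t))
      (fun i t => Real.sqrt (w i) * hFunD (m i) (Real.sqrt (w i) * t))
      (fun i t => (w i ^ 2 * t ^ 2 - (2 * (m i : ℝ) + 1) * w i) *
          hermiteFun (m i) (Real.sqrt (w i) * t))
      hd1 hd2 x
  rw [hl, hQ x]
  have hP : ∀ i, hermiteFun (m i) (Real.sqrt (w i) * ⟪x, v i⟫) *
      ∏ k ∈ Finset.univ.erase i, hermiteFun (m k) (Real.sqrt (w k) * ⟪x, v k⟫)
      = ∏ k, hermiteFun (m k) (Real.sqrt (w k) * ⟪x, v k⟫) :=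
    fun i => Finset.mul_prod_erase Finset.univ
      (fun k => hermiteFun (m k) (Real.sqrt (w k) * ⟪x, v k⟫)) (Finset.mem_univ i)
  rw [Finset.sum_congr rfl (fun i _ => by rw [mul_assoc, hP i])]
  simp_rw [sub_mul]
  rw [Finset.sum_sub_distrib, ← Finset.sum_mul, ← Finset.sum_mul]
  ring
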